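/- There exists a sequence of positive integers ν_m → ∞ such that the sets S¹ ∩ (1/√ν_m)ℤ² = { k/√ν_m : k ∈ ℤ², |k|² = ν_m } converge, in the Hausdorff distance, to the full unit circle S¹ ⊂ ℝ² as m → ∞. Equivalently, for every ε > 0 there exists m₀ such that for all m ≥ m₀ and every x ∈ S¹ there is k ∈ ℤ² with |k|² = ν_m and |x − k/√ν_m| < ε. -/

import Mathlib

open Filter Real

noncomputable section


lemma key_density (x0 x1 : ℝ) (h : x0 ^ 2 + x1 ^ 2 = 1) (ε : ℝ) (hε : 0 < ε) :
    ∃ (c : ℕ) (k : Fin 2 → ℤ), 0 < c ∧ (k 0) ^ 2 + (k 1) ^ 2 = (c : ℤ) ^ 2 ∧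
      Real.sqrt ((x0 - (k 0 : ℝ) / c) ^ 2 + (x1 - (k 1 : ℝ) / c) ^ 2) < ε := by
  have hx0 : -1 ≤ x0 := by nlinarith
  rcases eq_or_lt_of_le hx0 with h1 | h1
  · have hx1 : x1 = 0 := by nlinarith
    refine ⟨1, ![-1, 0], one_pos, by norm_num, ?_⟩
    simp [hx1, ← h1]
    positivity
  · have hpos : 0 < 1 + x0 := by linarith
    set t := x1 / (1 + x0) with ht
    have hden : (1 + x0) ≠ 0 := ne_of_gt hpos
    have hx0' : x0 = (1 - t ^ 2) / (1 + t ^ 2) := by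
      rw [ht]; field_simp; nlinarith [sq_nonneg (1+x0)]
    have hx1' : x1 = 2 * t / (1 + t ^ 2) := by
      rw [ht]; field_simp; linear_combination (x1*(1+x0) - x1*x0)*h
    obtain ⟨r, hr⟩ := exists_rat_near t (show (0:ℝ) < ε/4 by positivity)
    set u : ℝ := (r : ℝ) with hu
    set p : ℤ := r.num with hp
    set q : ℕ := r.den with hq
    have hq0 : 0 < (q:ℝ) := by exact_mod_cast r.pos
    have hupq : u = (p : ℝ) / (q : ℝ) := by rw [hu, hp, hq, Rat.cast_def]
    refine ⟨p.natAbs ^ 2 + q ^ 2, ![(q:ℤ)^2 - p^2, 2*p*q], by positivity, ?_, ?_⟩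
    · have : ((p.natAbs ^ 2 + q ^ 2 : ℕ) : ℤ) = p^2 + (q:ℤ)^2 := by
        push_cast [Nat.cast_natAbs, sq_abs]; ring
      simp only [this]
      simp [Matrix.cons_val_zero, Matrix.cons_val_one]
      ring
    · have hcR : ((p.natAbs ^ 2 + q ^ 2 : ℕ) : ℝ) = (p:ℝ)^2 + (q:ℝ)^2 := by
        push_cast [Nat.cast_natAbs, sq_abs]; ring
      have hcpos : (0:ℝ) < (p:ℝ)^2 + (q:ℝ)^2 := by positivity
      have hqR : ((q:ℝ)) ≠ 0 := ne_of_gt hq0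
      have hident : (x0 - ((q:ℝ)^2 - (p:ℝ)^2)/((p:ℝ)^2+(q:ℝ)^2))^2
          + (x1 - 2*(p:ℝ)*(q:ℝ)/((p:ℝ)^2+(q:ℝ)^2))^2
          = 4*(t-u)^2/((1+t^2)*(1+u^2)) := by
        rw [hx0', hx1', hupq]
        have ht2 : (1:ℝ) + t^2 ≠ 0 := by positivity
        field_simp
        ring
      have hD : 1 ≤ (1+t^2)*(1+u^2) := by nlinarith [sq_nonneg t, sq_nonneg u]
      have hle : (x0 - ((q:ℝ)^2 - (p:ℝ)^2)/((p:ℝ)^2+(q:ℝ)^2))^2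
          + (x1 - 2*(p:ℝ)*(q:ℝ)/((p:ℝ)^2+(q:ℝ)^2))^2 ≤ 4*(t-u)^2 := by
        rw [hident]; exact div_le_self (by positivity) hD
      have hcomp : Real.sqrt ((x0 - ((q:ℝ)^2 - (p:ℝ)^2)/((p:ℝ)^2+(q:ℝ)^2))^2
          + (x1 - 2*(p:ℝ)*(q:ℝ)/((p:ℝ)^2+(q:ℝ)^2))^2) < ε := by
        calc Real.sqrt _ ≤ Real.sqrt (4*(t-u)^2) := Real.sqrt_le_sqrt hle
          _ = 2*|t-u| := by
              rw [show 4*(t-u)^2 = (2*(t-u))^2 by ring, Real.sqrt_sq_eq_abs, abs_mul]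
              norm_num
          _ < ε := by rw [hu] at hr ⊢; linarith [hr]
      simp only [Matrix.cons_val_zero, Matrix.cons_val_one, Matrix.head_cons, hcR]
      convert hcomp using 4 <;> push_cast <;> ring

/-- **Rational directions on circles of integer radius-squared.** There is a sequence of
positive integers `ν_m → ∞` such that the renormalized lattice points
`{k/√ν_m : k ∈ ℤ², |k|² = ν_m}` converge to the full unit circle `S¹` in the Hausdorff sense:
for every `ε > 0`, eventually every point of `S¹` is within (Euclidean) distance `ε` of some
`k/√ν_m` with `k ∈ ℤ²`, `|k|² = ν_m`. -/
theorem lattice_circles_dense_in_S1 :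
    ∃ ν : ℕ → ℕ,
      (∀ m, 0 < ν m) ∧
      Tendsto ν atTop atTop ∧
      ∀ ε > (0 : ℝ), ∃ m₀ : ℕ, ∀ m ≥ m₀,
        ∀ x : Fin 2 → ℝ, (x 0) ^ 2 + (x 1) ^ 2 = 1 →
          ∃ k : Fin 2 → ℤ, (k 0) ^ 2 + (k 1) ^ 2 = (ν m : ℤ) ∧
            Real.sqrt ((x 0 - (k 0 : ℝ) / Real.sqrt (ν m)) ^ 2 +
              (x 1 - (k 1 : ℝ) / Real.sqrt (ν m)) ^ 2) < ε := by
  refine ⟨fun m => m.factorial ^ 2, fun m => by positivity, ?_, ?_⟩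
  · exact tendsto_atTop_mono
      (fun m => le_trans m.self_le_factorial (Nat.le_self_pow two_ne_zero _)) tendsto_id
  intro ε hε
  have key : ∀ (x0 x1 : ℝ), x0 ^ 2 + x1 ^ 2 = 1 →
      ∃ (c : ℕ) (k : Fin 2 → ℤ), 0 < c ∧ (k 0) ^ 2 + (k 1) ^ 2 = (c : ℤ) ^ 2 ∧
        Real.sqrt ((x0 - (k 0 : ℝ) / c) ^ 2 + (x1 - (k 1 : ℝ) / c) ^ 2) < ε :=
    fun x0 x1 h => key_density x0 x1 h ε hε
  set E := EuclideanSpace ℝ (Fin 2)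
  -- distance formula
  have hdist : ∀ y z : E, dist y z =
      Real.sqrt ((y 0 - z 0) ^ 2 + (y 1 - z 1) ^ 2) := by
    intro y z
    rw [EuclideanSpace.dist_eq]
    simp [Fin.sum_univ_two, Real.dist_eq, sq_abs]
  set U : ℕ → Set E := fun n =>
    ⋃ (k : Fin 2 → ℤ) (_ : (k 0) ^ 2 + (k 1) ^ 2 = ((n : ℤ) + 1) ^ 2),
      Metric.ball ((WithLp.equiv 2 (Fin 2 → ℝ)).symm (fun i => (k i : ℝ) / ((n : ℝ) + 1))) ε
    with hU
  have hopen : ∀ n, IsOpen (U n) := fun n =>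
    isOpen_iUnion fun k => isOpen_iUnion fun _ => Metric.isOpen_ball
  have hcover : Metric.sphere (0 : E) 1 ⊆ ⋃ n, U n := by
    intro y hy
    have hnorm : (y 0) ^ 2 + (y 1) ^ 2 = 1 := by
      have h1 : ‖y‖ = 1 := by simpa using hy
      have h2 : ‖y‖ = Real.sqrt ((y 0) ^ 2 + (y 1) ^ 2) := by
        rw [EuclideanSpace.norm_eq]
        simp [Fin.sum_univ_two, Real.norm_eq_abs, sq_abs]
      have h3 : Real.sqrt ((y 0) ^ 2 + (y 1) ^ 2) = 1 := by rw [← h2, h1]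
      nlinarith [Real.sq_sqrt (show (0:ℝ) ≤ (y 0)^2 + (y 1)^2 by positivity), h3]
    obtain ⟨c, k, hc, hk, hd⟩ := key (y 0) (y 1) hnorm
    refine Set.mem_iUnion.2 ⟨c - 1, ?_⟩
    have hc1 : (c - 1 : ℕ) + 1 = c := Nat.succ_pred_eq_of_pos hc
    refine Set.mem_iUnion.2 ⟨k, Set.mem_iUnion.2 ⟨?_, ?_⟩⟩
    · rw [show ((c-1 : ℕ) : ℤ) + 1 = (c : ℤ) by exact_mod_cast hc1]
      exact hk
    · rw [Metric.mem_ball, hdist]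
      have : ((c - 1 : ℕ) : ℝ) + 1 = (c : ℝ) := by exact_mod_cast hc1
      simp only [WithLp.equiv_symm_apply, PiLp.toLp_apply, this]
      exact hd
  obtain ⟨s, hs⟩ := (isCompact_sphere (0 : E) 1).elim_finite_subcover U hopen hcover
  refine ⟨s.sup id + 1, fun m hm x hx => ?_⟩
  set y : E := (WithLp.equiv 2 (Fin 2 → ℝ)).symm x with hy
  have hyx : ∀ i, y i = x i := fun i => rfl
  have hysph : y ∈ Metric.sphere (0 : E) 1 := by
    rw [mem_sphere_zero_iff_norm, EuclideanSpace.norm_eq]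
    simp only [Fin.sum_univ_two, Real.norm_eq_abs, sq_abs, hyx]
    rw [hx]; exact Real.sqrt_one
  obtain ⟨n, hns, hyU⟩ := Set.mem_iUnion₂.1 (hs hysph)
  obtain ⟨k, hksum, hkb⟩ := Set.mem_iUnion₂.1 hyU
  set c : ℕ := n + 1 with hc
  have hcm : c ≤ m := by
    have h1 : n ≤ s.sup id := by simpa using Finset.le_sup (f := id) hns
    show n + 1 ≤ m
    exact le_trans (Nat.succ_le_succ h1) hm
  have hcd : c ∣ m.factorial := Nat.dvd_factorial (Nat.succ_pos n) hcm
  set d : ℕ := m.factorial / c with hd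
  have hcdm : c * d = m.factorial := Nat.mul_div_cancel' hcd
  have hdpos : 0 < d := by
    rcases Nat.eq_zero_or_pos d with h0 | h0
    · exfalso; rw [h0, mul_zero] at hcdm; have := m.factorial_pos; omega
    · exact h0
  refine ⟨fun i => (d : ℤ) * k i, ?_, ?_⟩
  · have : ((d:ℤ) * k 0)^2 + ((d:ℤ) * k 1)^2 = (d:ℤ)^2 * ((k 0)^2 + (k 1)^2) := by ring
    rw [this, show (k 0)^2 + (k 1)^2 = ((c:ℤ))^2 by push_cast [hc]; exact_mod_cast hksum]
    push_cast [← hcdm]; ring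
  · have hfac : Real.sqrt ((m.factorial ^ 2 : ℕ) : ℝ) = (m.factorial : ℝ) := by
      push_cast
      exact Real.sqrt_sq (by positivity)
    have hcR : (0:ℝ) < (c:ℝ) := by exact_mod_cast Nat.succ_pos n
    have hdR : ((d:ℝ)) ≠ 0 := by exact_mod_cast hdpos.ne'
    have hdiv : ∀ i, (((d:ℤ) * k i : ℤ) : ℝ) / (m.factorial : ℝ) = (k i : ℝ) / (c : ℝ) := by
      intro i
      rw [show ((m.factorial : ℝ)) = (c:ℝ) * (d:ℝ) by exact_mod_cast hcdm.symm]
      push_cast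
      rw [mul_comm (c:ℝ) ((d:ℝ)), mul_div_mul_left _ _ hdR]
    rw [hfac]
    simp only [hdiv]
    have := Metric.mem_ball.1 hkb
    rw [hdist] at this
    simp only [WithLp.equiv_symm_apply, PiLp.toLp_apply, hyx] at this
    have hcn : ((n:ℝ)) + 1 = (c:ℝ) := by push_cast [hc]; ring
    rw [hcn] at this
    exact this
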